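/- Let H be a finite-dimensional real inner product space, let τ > 0, σ ≥ 1/2, m ≥ 1. Let B be a positive definite operator on H, let A be a self-adjoint operator on H with A ≥ δI for some δ > 0, and for coefficients a_i > 0, b_i > 0 set D_i = a_i (b_i I + A)⁻¹ A, i = 1,…,m. Suppose a sequence (w^n)_{n=0,…,N} in H together with substeps w^{n,0} = w^n, w^{n,1}, …, w^{n,m} = w^{n+1} satisfies, for every n and every i = 1,…,m, the splitting scheme B (w^{n,i} − w^{n,i−1})/τ + D_i(σ w^{n,i} + (1−σ) w^{n,i−1}) = 0, with w^0 = u⁰. Then the scheme is stable in the B-norm: ‖w^{n+1}‖_B ≤ ‖u⁰‖_B for all n = 0,…,N−1. -/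

import Mathlib

open scoped RealInnerProductSpace

/-- Stability in the `B`-norm of the componentwise splitting scheme with weight
`σ ≥ 1/2` for the equation `B dv/dt + D v = 0`, `D = Σᵢ Dᵢ`, `Dᵢ = aᵢ (bᵢ I + A)⁻¹ A`. -/
theorem splitting_scheme_B_norm_stable
    {H : Type*} [NormedAddCommGroup H] [InnerProductSpace ℝ H] [FiniteDimensional ℝ H]
    (τ σ : ℝ) (hτ : 0 < τ) (hσ : 1 / 2 ≤ σ)
    (m : ℕ) (hm : 1 ≤ m)
    (B : H →ₗ[ℝ] H)
    (hBsym : ∀ x y : H, ⟪B x, y⟫ = ⟪x, B y⟫)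
    (hBpos : ∀ x : H, x ≠ 0 → 0 < ⟪B x, x⟫)
    (A : H →ₗ[ℝ] H)
    (hAsym : ∀ x y : H, ⟪A x, y⟫ = ⟪x, A y⟫)
    (δ : ℝ) (hδ : 0 < δ)
    (hAδ : ∀ x : H, δ * ‖x‖ ^ 2 ≤ ⟪A x, x⟫)
    (a b : Fin m → ℝ) (ha : ∀ i, 0 < a i) (hb : ∀ i, 0 < b i)
    (D : Fin m → (H →ₗ[ℝ] H))
    (hD : ∀ i, D i = a i • (Ring.inverse (b i • (1 : H →ₗ[ℝ] H) + A) * A))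
    (N : ℕ) (u0 : H) (w : ℕ → H) (ws : ℕ → ℕ → H)
    (hw0 : w 0 = u0)
    (hws0 : ∀ n, n < N → ws n 0 = w n)
    (hwsm : ∀ n, n < N → ws n m = w (n + 1))
    (hscheme : ∀ n, n < N → ∀ i : Fin m,
      (1 / τ) • B (ws n (i + 1) - ws n i) +
        D i (σ • ws n (i + 1) + (1 - σ) • ws n i) = 0) :
    ∀ n, n < N →
      Real.sqrt ⟪B (w (n + 1)), w (n + 1)⟫ ≤ Real.sqrt ⟪B u0, u0⟫ := by
  -- `B` is positive semidefinite
  have hBnn : ∀ x : H, 0 ≤ ⟪B x, x⟫ := by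
    intro x
    rcases eq_or_ne x 0 with h | h
    · simp [h]
    · exact le_of_lt (hBpos x h)
  -- `A` is positive semidefinite
  have hAnn : ∀ x : H, 0 ≤ ⟪A x, x⟫ := fun x =>
    le_trans (by positivity) (hAδ x)
  -- each `D i` is positive semidefinite
  have hDnn : ∀ i : Fin m, ∀ v : H, 0 ≤ ⟪D i v, v⟫ := by
    intro i v
    set C : H →ₗ[ℝ] H := b i • (1 : H →ₗ[ℝ] H) + A with hC
    have hCunit : IsUnit C := by
      rw [LinearMap.isUnit_iff_ker_eq_bot, LinearMap.ker_eq_bot']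
      intro x hx
      by_contra hxne
      have h1 : ⟪C x, x⟫ = 0 := by rw [hx]; simp
      have h2 : 0 < ⟪C x, x⟫ := by
        have hCx : ⟪C x, x⟫ = b i * ‖x‖ ^ 2 + ⟪A x, x⟫ := by
          simp [hC, LinearMap.add_apply, LinearMap.smul_apply, inner_add_left,
            real_inner_smul_left, real_inner_self_eq_norm_sq]
        rw [hCx]
        have hx2 : 0 < ‖x‖ ^ 2 := by
          have := norm_pos_iff.mpr hxne
          positivity
        nlinarith [hAδ x, hb i]
      linarith
    have hinvC : Ring.inverse C * C = 1 := Ring.inverse_mul_cancel C hCunit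
    have hCinv : C * Ring.inverse C = 1 := Ring.mul_inverse_cancel C hCunit
    set y : H := Ring.inverse C v with hy
    have hv : C y = v := by
      have := congrArg (fun f : H →ₗ[ℝ] H => f v) hCinv
      simpa [hy, Module.End.mul_apply] using this
    have hcomm : A * C = C * A := by
      simp only [hC, mul_add, add_mul, mul_smul_comm, smul_mul_assoc, mul_one, one_mul]
    have hDv : D i v = a i • A y := by
      rw [hD i]
      have hkey : (Ring.inverse C * A) v = A y := by
        have h1 : (Ring.inverse C * A) (C y) = (Ring.inverse C * (A * C)) y := by
          simp [Module.End.mul_apply]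
        rw [← hv, h1, hcomm, ← mul_assoc, hinvC]
        simp [Module.End.mul_apply]
      simp only [LinearMap.smul_apply]
      exact congrArg (fun u => a i • u) hkey
    rw [hDv, ← hv]
    have hexp : ⟪a i • A y, C y⟫ = a i * (b i * ⟪A y, y⟫ + ⟪A y, A y⟫) := by
      simp [hC, LinearMap.add_apply, LinearMap.smul_apply, inner_add_right,
        real_inner_smul_left, real_inner_smul_right]
      ring
    rw [hexp]
    have h1 : 0 ≤ ⟪A y, y⟫ := hAnn y
    have h2 : (0 : ℝ) ≤ ⟪A y, A y⟫ := real_inner_self_nonneg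
    exact mul_nonneg (ha i).le (add_nonneg (mul_nonneg (hb i).le h1) h2)
  -- one substep does not increase the B-energy
  have hstep : ∀ n, n < N → ∀ i : Fin m,
      ⟪B (ws n (i + 1)), ws n (i + 1)⟫ ≤ ⟪B (ws n i), ws n i⟫ := by
    intro n hn i
    set x : H := ws n (i : ℕ) with hx
    set y : H := ws n ((i : ℕ) + 1) with hy
    set z : H := σ • y + (1 - σ) • x with hz
    have hsch : (1 / τ) • B (y - x) + D i z = 0 := hscheme n hn i
    have h0 : (1 / τ) • B (y - x) = -(D i z) := eq_neg_of_add_eq_zero_left hsch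
    have h2 : (1 / τ) * ⟪B (y - x), z⟫ = -⟪D i z, z⟫ := by
      have := congrArg (fun v : H => ⟪v, z⟫) h0
      simpa [real_inner_smul_left, inner_neg_left] using this
    have h3 : ⟪B (y - x), z⟫ ≤ 0 := by
      have hd := hDnn i z
      have hIP : ⟪B (y - x), z⟫ = -(τ * ⟪D i z, z⟫) := by
        rw [map_sub]
        field_simp at h2
        rw [map_sub] at h2
        linarith
      rw [hIP]
      nlinarith [mul_nonneg hτ.le hd]
    have hsymR : ⟪B x, y⟫ = ⟪B y, x⟫ := by
      rw [hBsym x y, real_inner_comm]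
    have e1 : ⟪B (y - x), y - x⟫ = ⟪B y, y⟫ - 2 * ⟪B y, x⟫ + ⟪B x, x⟫ := by
      simp [map_sub, inner_sub_left, inner_sub_right, hsymR]
      ring
    have e2 : ⟪B (y - x), z⟫ =
        σ * ⟪B y, y⟫ + (1 - 2 * σ) * ⟪B y, x⟫ - (1 - σ) * ⟪B x, x⟫ := by
      simp [hz, map_sub, inner_sub_left, inner_add_right, real_inner_smul_right, hsymR]
      ring
    have hge : 0 ≤ ⟪B (y - x), y - x⟫ := hBnn (y - x)
    rw [e1] at hge
    rw [e2] at h3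
    nlinarith [mul_nonneg (by linarith : (0:ℝ) ≤ 2 * σ - 1) hge]
  -- chain the substeps within one time step
  have hchain : ∀ n, n < N → ∀ k, k ≤ m →
      ⟪B (ws n k), ws n k⟫ ≤ ⟪B (ws n 0), ws n 0⟫ := by
    intro n hn k
    induction k with
    | zero => intro _; exact le_refl _
    | succ k ih =>
      intro hk
      have hkm : k < m := hk
      have := hstep n hn ⟨k, hkm⟩
      simp only [Fin.val_mk] at this
      exact le_trans this (ih (le_of_lt hkm))
  -- energy is non-increasing over time steps
  have hmain : ∀ n, n ≤ N → ⟪B (w n), w n⟫ ≤ ⟪B u0, u0⟫ := by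
    intro n
    induction n with
    | zero => intro _; rw [hw0]
    | succ n ih =>
      intro hn
      have hnN : n < N := hn
      have h1 : ⟪B (w (n + 1)), w (n + 1)⟫ ≤ ⟪B (w n), w n⟫ := by
        rw [← hwsm n hnN, ← hws0 n hnN]
        exact hchain n hnN m (le_refl m)
      exact le_trans h1 (ih (le_of_lt hnN))
  intro n hn
  exact Real.sqrt_le_sqrt (hmain (n + 1) hn)
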